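/- For a symmetric lattice n-homomorphism T : L^n → M between distributive lattices with diagonal P_T(x) = T(x,...,x), and any x_1,...,x_n ∈ L, one has P_T(⋁_{i=1}^n x_i) = ⋁ T(x_1^{k_1},...,x_n^{k_n}), where the join runs over all tuples (k_1,...,k_n) of nonnegative integers with k_1 + ... + k_n = n, and T(x_1^{k_1},...,x_n^{k_n}) denotes T applied with x_i repeated k_i times. -/

import Mathlib

def median {L : Type*} [DistribLattice L] {n : ℕ} (k : ℕ) (hk1 : 1 ≤ k) (hkn : k ≤ n)
    (x : Fin n → L) : L :=
  ((Finset.univ.powersetCard (n + 1 - k)).attach).sup'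
    (Finset.attach_nonempty_iff.mpr
      (Finset.powersetCard_nonempty.mpr (by simp [Finset.card_univ]; omega)))
    fun s => s.1.inf'
      (Finset.card_pos.mp (by
        have h := (Finset.mem_powersetCard.mp s.2).2
        omega)) x

def medianInf {L : Type*} [DistribLattice L] {n : ℕ} (k : ℕ) (hk1 : 1 ≤ k) (hkn : k ≤ n)
    (x : Fin n → L) : L :=
  ((Finset.univ.powersetCard (n + 1 - k)).attach).inf'
    (Finset.attach_nonempty_iff.mpr
      (Finset.powersetCard_nonempty.mpr (by simp [Finset.card_univ]; omega)))
    fun s => s.1.sup'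
      (Finset.card_pos.mp (by
        have h := (Finset.mem_powersetCard.mp s.2).2
        omega)) x
def TotalOrderizationInvariant {L : Type*} [DistribLattice L] {A : Type*} {n : ℕ}
    (T : (Fin n → L) → A) : Prop :=
  ∀ x : Fin n → L,
    T x = T fun k => median (k.1 + 1) (Nat.succ_le_succ (Nat.zero_le _)) k.2 x

/-- `T` is symmetric: invariant under every permutation of its arguments. -/
def IsSymmetricMap {L A : Type*} {n : ℕ} (T : (Fin n → L) → A) : Prop :=
  ∀ (σ : Equiv.Perm (Fin n)) (x : Fin n → L), T (x ∘ σ) = T x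
/-- `T : Lⁿ → M` is a lattice n-homomorphism: in each coordinate separately it
preserves binary joins and binary meets. -/
def IsLatticeMultiHom {L M : Type*} [DistribLattice L] [DistribLattice M] {n : ℕ}
    (T : (Fin n → L) → M) : Prop :=
  ∀ (x : Fin n → L) (i : Fin n) (y : L),
    T (Function.update x i (x i ⊔ y)) = T x ⊔ T (Function.update x i y) ∧
    T (Function.update x i (x i ⊓ y)) = T x ⊓ T (Function.update x i y)

/-- `P : L → M` is a lattice homomorphism. -/
def IsLatticeHomMap {L M : Type*} [DistribLattice L] [DistribLattice M] (P : L → M) : Prop :=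
  ∀ a b : L, P (a ⊔ b) = P a ⊔ P b ∧ P (a ⊓ b) = P a ⊓ P b

/-- The vector with xᵢ repeated kᵢ times (in order), where ∑ kᵢ = n. -/
def repVec {L : Type*} {n : ℕ} (k : Fin n → ℕ) (hk : ∑ i, k i = n) (x : Fin n → L) :
    Fin n → L :=
  fun t =>
    (List.flatten (List.ofFn fun i => List.replicate (k i) (x i))).get
      (Fin.cast (by simp [List.length_flatten, Function.comp, List.sum_ofFn, hk]) t)


section helpers
variable {L M : Type*} [DistribLattice L] [DistribLattice M] {n : ℕ}

lemma update_sup (T : (Fin n → L) → M) (hT : IsLatticeMultiHom T)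
    (z : Fin n → L) (i : Fin n) (a b : L) :
    T (Function.update z i (a ⊔ b)) = T (Function.update z i a) ⊔ T (Function.update z i b) := by
  have h := (hT (Function.update z i a) i b).1
  simpa using h

lemma update_sup' (T : (Fin n → L) → M) (hT : IsLatticeMultiHom T)
    (z : Fin n → L) (i : Fin n) {α : Type*} (s : Finset α) (hs : s.Nonempty) (g : α → L) :
    T (Function.update z i (s.sup' hs g)) = s.sup' hs fun a => T (Function.update z i (g a)) := by
  induction hs using Finset.Nonempty.cons_induction with
  | singleton a => simp
  | cons a s ha hs ih => rw [Finset.sup'_cons hs, Finset.sup'_cons hs, update_sup T hT, ih]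

lemma expand (T : (Fin n → L) → M) (hT : IsLatticeMultiHom T) (x : Fin n → L)
    (hne : (Finset.univ : Finset (Fin n)).Nonempty)
    (hne2 : (Finset.univ : Finset (Fin n → Fin n)).Nonempty)
    (S : Finset (Fin n)) (y : Fin n → L) :
    T (S.piecewise (fun _ => Finset.univ.sup' hne x) y) =
      Finset.univ.sup' hne2 (fun f => T (S.piecewise (x ∘ f) y)) := by
  classical
  induction S using Finset.induction_on generalizing y with
  | empty => simp [Finset.piecewise_empty, Finset.sup'_const]
  | @insert i S hi ih =>
    rw [Finset.piecewise_insert]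
    rw [update_sup' T hT _ i Finset.univ hne x]
    apply le_antisymm
    · apply Finset.sup'_le; intro j _
      rw [Finset.update_piecewise_of_notMem S _ _ hi, ih]
      apply Finset.sup'_le; intro f _
      refine le_trans (le_of_eq ?_) (Finset.le_sup' _ (Finset.mem_univ (Function.update f i j)))
      congr 1
      funext t
      by_cases htS : t ∈ S
      · have hti : t ≠ i := fun h => hi (h ▸ htS)
        simp [Finset.piecewise_eq_of_mem, htS, Function.comp, Function.update_of_ne hti]
      · by_cases hti : t = i
        · subst hti
          simp [Function.comp, hi, Finset.piecewise_eq_of_notMem, htS]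
        · simp [Finset.piecewise_eq_of_notMem, htS, hti, Function.comp,
            Function.update_of_ne hti]
    · apply Finset.sup'_le; intro f _
      refine le_trans ?_ (Finset.le_sup' _ (Finset.mem_univ (f i)))
      rw [Finset.update_piecewise_of_notMem S _ _ hi, ih]
      refine le_trans (le_of_eq ?_) (Finset.le_sup' _ (Finset.mem_univ f))
      congr 1
      funext t
      by_cases htS : t ∈ S
      · have hti : t ≠ i := fun h => hi (h ▸ htS)
        simp [Finset.piecewise_eq_of_mem, htS, Function.comp, Function.update_of_ne hti]
      · by_cases hti : t = i
        · subst hti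
          simp [Function.comp, hi, Finset.piecewise_eq_of_notMem, htS]
        · simp [Finset.piecewise_eq_of_notMem, htS, hti, Function.comp,
            Function.update_of_ne hti]

lemma exists_perm_comp (f g : Fin n → Fin n)
    (h : ∀ i, (Finset.univ.filter fun t => f t = i).card
      = (Finset.univ.filter fun t => g t = i).card) :
    ∃ σ : Equiv.Perm (Fin n), f ∘ σ = g := by
  have h' : ∀ i, Fintype.card {t // g t = i} = Fintype.card {t // f t = i} := by
    intro i
    rw [Fintype.card_subtype, Fintype.card_subtype, h]
  exact ⟨Equiv.ofFiberEquiv fun i => Fintype.equivOfCardEq (h' i),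
    funext fun t => Equiv.ofFiberEquiv_map _ t⟩

lemma count_ofFn_eq (g : Fin n → Fin n) (i : Fin n) :
    (Finset.univ.filter fun t => g t = i).card = (List.ofFn g).count i := by
  have h1 : (Finset.univ.filter fun t => g t = i) = (Finset.univ.filter fun a => i = g a) :=
    Finset.filter_congr fun t _ => by rw [eq_comm]
  rw [h1, List.ofFn_eq_map, ← Multiset.coe_count, ← Multiset.map_coe, Multiset.count_map]
  rfl

lemma repVec_eq (k : Fin n → ℕ) (hk : ∑ i, k i = n) (x : Fin n → L) :
    ∃ g : Fin n → Fin n, repVec k hk x = x ∘ g ∧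
      ∀ i, (Finset.univ.filter fun t => g t = i).card = k i := by
  set l : List (Fin n) := (List.ofFn fun i => List.replicate (k i) i).flatten with hl
  have hlen : n = l.length := by
    simp [hl, List.length_flatten, Function.comp, List.sum_ofFn, hk]
  have hmap : (List.ofFn fun i => List.replicate (k i) (x i)).flatten = l.map x := by
    rw [hl, List.map_flatten, List.map_ofFn]
    simp [Function.comp_def, List.map_replicate]
  have hofn : List.ofFn (fun t : Fin n => l.get (Fin.cast hlen t)) = l := by
    have key : ∀ (m : ℕ) (l' : List (Fin n)) (h : m = l'.length),
        List.ofFn (fun t : Fin m => l'.get (Fin.cast h t)) = l' := by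
      intro m l' h
      subst h
      exact List.ofFn_get l'
    exact key n l hlen
  refine ⟨fun t => l.get (Fin.cast hlen t), ?_, ?_⟩
  · funext t
    show (List.flatten (List.ofFn fun i => List.replicate (k i) (x i))).get _
        = x (l.get (Fin.cast hlen t))
    rw [List.get_of_eq hmap]
    simp [List.get_eq_getElem, List.getElem_map]
  · intro i
    rw [count_ofFn_eq, hofn, hl, List.count_flatten]
    simp [List.map_ofFn, Function.comp, List.count_replicate, List.sum_ofFn]

lemma fiber_sum (f : Fin n → Fin n) :
    ∑ i, (Finset.univ.filter fun t => f t = i).card = n := by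
  classical
  rw [← Finset.card_eq_sum_card_fiberwise fun x _ => Finset.mem_univ (f x)]
  simp

end helpers

/-- P_T(⋁ᵢ xᵢ) is the join of T(x₁^{k₁},...,xₙ^{kₙ}) over all tuples (k₁,...,kₙ) of
nonnegative integers summing to n. -/
theorem diagonal_sup_eq {L M : Type*} [DistribLattice L] [DistribLattice M]
    {n : ℕ} (hn : 2 ≤ n) (T : (Fin n → L) → M) (hT : IsLatticeMultiHom T)
    (hsymm : IsSymmetricMap T) (x : Fin n → L) :
    (T fun _ =>
        Finset.univ.sup'
          (by have : Nonempty (Fin n) := ⟨⟨0, by omega⟩⟩; exact Finset.univ_nonempty) x) =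
      (Finset.Nat.antidiagonalTuple n n).attach.sup'
        (Finset.attach_nonempty_iff.mpr
          ⟨fun i => if i = ⟨0, by omega⟩ then n else 0, by
            rw [Finset.Nat.mem_antidiagonalTuple]; simp⟩)
        (fun k => T (repVec k.1 (Finset.Nat.mem_antidiagonalTuple.mp k.2) x)) := by
  classical
  have hne : (Finset.univ : Finset (Fin n)).Nonempty := ⟨⟨0, by omega⟩, Finset.mem_univ _⟩
  have hne2 : (Finset.univ : Finset (Fin n → Fin n)).Nonempty := ⟨id, Finset.mem_univ _⟩
  have key := expand T hT x hne hne2 Finset.univ x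
  simp only [Finset.piecewise_univ] at key
  apply Eq.trans (b := Finset.univ.sup' hne2 fun f => T (x ∘ f))
  · exact key
  · apply le_antisymm
    · apply Finset.sup'_le
      intro f _
      set k : Fin n → ℕ := fun i => (Finset.univ.filter fun t => f t = i).card with hkdef
      have hks : ∑ i, k i = n := fiber_sum f
      have hkmem : k ∈ Finset.Nat.antidiagonalTuple n n :=
        Finset.Nat.mem_antidiagonalTuple.mpr hks
      obtain ⟨g, hg1, hg2⟩ := repVec_eq k hks x
      obtain ⟨σ, hσ⟩ := exists_perm_comp f g fun i => (hg2 i).symm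
      have hTeq : T (x ∘ f) = T (repVec k hks x) := by
        rw [hg1]
        have hcg : x ∘ g = (x ∘ f) ∘ σ := by rw [← hσ]; rfl
        rw [hcg, hsymm σ (x ∘ f)]
      exact hTeq.trans_le (Finset.le_sup'
        (fun k' => T (repVec k'.1 (Finset.Nat.mem_antidiagonalTuple.mp k'.2) x))
        (Finset.mem_attach _ ⟨k, hkmem⟩))
    · apply Finset.sup'_le
      rintro ⟨k, hk⟩ _
      obtain ⟨g, hg1, hg2⟩ := repVec_eq k (Finset.Nat.mem_antidiagonalTuple.mp hk) x
      show T (repVec k _ x) ≤ _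
      rw [hg1]
      exact Finset.le_sup' (fun f => T (x ∘ f)) (Finset.mem_univ g)
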